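/- Let n ≥ 2 and let A be a real symmetric n × n matrix. Set t = trace A and s = ∑_{i,j} (A i j)^2. Then t * (A 0 0) − ∑_j (A 0 j)^2 ≥ ((n−1)/n) * ( 2t²/n − s − (n−2) * √( (t²/n) * (s − t²/n) / (n−1) ) ). -/

import Mathlib

lemma key_ineq (m t a b s : ℝ) (hm : 2 ≤ m) (hb : 0 ≤ b)
    (hw : 0 ≤ (m-1)*(s - a^2 - 2*b) - (t-a)^2) :
    t*a - (a^2 + b) ≥ ((m-1)/m) * (2*t^2/m - s - (m-2)*Real.sqrt ((t^2/m)*(s - t^2/m)/(m-1))) := by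
  have hm0 : (0:ℝ) < m := by linarith
  have hm1 : (0:ℝ) < m - 1 := by linarith
  have hm2 : (0:ℝ) ≤ m - 2 := by linarith
  set w : ℝ := (m-1)*(s - a^2 - 2*b) - (t-a)^2 with hwdef
  have hQ : 0 ≤ s - t^2/m := by
    rw [sub_nonneg, div_le_iff₀ hm0]
    nlinarith [sq_nonneg (m*a - t), mul_nonneg hb hm1.le]
  have harg : 0 ≤ (t^2/m)*(s - t^2/m)/(m-1) := by positivity
  set R : ℝ := Real.sqrt ((t^2/m)*(s - t^2/m)/(m-1)) with hRdef
  have hR0 : 0 ≤ R := Real.sqrt_nonneg _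
  have hR2 : R^2 = (t^2/m)*(s - t^2/m)/(m-1) := Real.sq_sqrt harg
  set N : ℝ := (m-1)*(2*t^2 - m*s) - m^2*(t*a - a^2 - b) with hNdef
  have hkey : ((m-1)/m)*(2*t^2/m - s) = N/m^2 + (t*a - (a^2+b)) := by
    field_simp [hNdef]; ring
  have hexp : ((m-1)/m) * (2*t^2/m - s - (m-2)*R)
      = (((m-1)/m)*(2*t^2/m - s)) - ((m-1)/m)*((m-2)*R) := by ring
  have hsR : 0 ≤ ((m-1)/m)*((m-2)*R) := by positivity
  rcases le_or_gt N 0 with hN | hN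
  · have : N/m^2 ≤ 0 := div_nonpos_of_nonpos_of_nonneg hN (by positivity)
    rw [ge_iff_le, hexp]; linarith
  · have hKey : N^2 ≤ (m-1)*(m-2)^2*t^2*(m*s - t^2) := by
      have hY : 0 ≤ w + (m-2)*b := by positivity
      have hid : (m-1)*(m-2)^2*t^2*(m*s - t^2) - N^2
          = m*((w + (m-2)*b)*(2*N + m*(w + (m-2)*b))
              + (m-2)^2*t^2*(w + 2*(m-1)*b)) := by
        rw [hNdef, hwdef]; ring
      nlinarith [mul_nonneg hY (by nlinarith : (0:ℝ) ≤ 2*N + m*(w + (m-2)*b)),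
        mul_nonneg (mul_nonneg (mul_nonneg hm2 hm2) (sq_nonneg t))
          (by positivity : (0:ℝ) ≤ w + 2*(m-1)*b)]
    have hrhs : (((m-1)/m)*((m-2)*R))^2 = (m-1)*(m-2)^2*t^2*(m*s - t^2)/m^4 := by
      have : (((m-1)/m)*((m-2)*R))^2 = ((m-1)/m)^2*(m-2)^2*R^2 := by ring
      rw [this, hR2]; field_simp
    have h : N/m^2 ≤ ((m-1)/m)*((m-2)*R) := by
      refine le_of_pow_le_pow_left₀ two_ne_zero hsR ?_
      rw [hrhs, div_pow]
      have h4 : ((m:ℝ)^2)^2 = m^4 := by ring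
      rw [h4]
      gcongr
    rw [ge_iff_le, hexp]; linarith

theorem stmt_6 (n : ℕ) (hn : 2 ≤ n) (A : Matrix (Fin n) (Fin n) ℝ) (hA : A.IsSymm)
    (t s : ℝ) (ht : t = Matrix.trace A) (hs : s = ∑ i, ∑ j, (A i j) ^ 2) :
    t * A ⟨0, by omega⟩ ⟨0, by omega⟩ - ∑ j, (A ⟨0, by omega⟩ j) ^ 2
      ≥ (((n : ℝ) - 1) / n) *
          (2 * t ^ 2 / n - s -
            ((n : ℝ) - 2) * Real.sqrt ((t ^ 2 / n) * (s - t ^ 2 / n) / ((n : ℝ) - 1))) := by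
  have hn0 : 0 < n := by omega
  set i0 : Fin n := ⟨0, by omega⟩ with hi0
  set a : ℝ := A i0 i0 with ha
  set b : ℝ := ∑ j ∈ Finset.univ.erase i0, (A i0 j)^2 with hbdef
  set d : ℝ := ∑ i ∈ Finset.univ.erase i0, (A i i)^2 with hddef
  set r : ℝ := ∑ i ∈ Finset.univ.erase i0, A i i with hrdef
  have hb : 0 ≤ b := Finset.sum_nonneg fun j _ => sq_nonneg _
  have h1 : ∑ j, (A i0 j)^2 = a^2 + b :=
    (Finset.add_sum_erase _ (fun j => (A i0 j)^2) (Finset.mem_univ i0)).symm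
  have h2 : t = a + r := by
    rw [ht]
    exact (Finset.add_sum_erase _ (fun i => A i i) (Finset.mem_univ i0)).symm
  -- s ≥ a^2 + 2b + d
  have h3 : a^2 + 2*b + d ≤ s := by
    rw [hs]
    rw [← Finset.add_sum_erase _ (fun i => ∑ j, (A i j)^2) (Finset.mem_univ i0), h1]
    have hrow : ∀ i ∈ Finset.univ.erase i0, (A i i0)^2 + (A i i)^2 ≤ ∑ j, (A i j)^2 := by
      intro i hi
      have hii : i ≠ i0 := Finset.ne_of_mem_erase hi
      rw [← Finset.add_sum_erase _ (fun j => (A i j)^2) (Finset.mem_univ i0)]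
      have : (A i i)^2 ≤ ∑ j ∈ Finset.univ.erase i0, (A i j)^2 :=
        Finset.single_le_sum (f := fun j => (A i j)^2) (fun j _ => sq_nonneg _)
          (Finset.mem_erase.mpr ⟨hii, Finset.mem_univ i⟩)
      linarith
    have hsum : ∑ i ∈ Finset.univ.erase i0, ((A i i0)^2 + (A i i)^2)
        ≤ ∑ i ∈ Finset.univ.erase i0, ∑ j, (A i j)^2 := Finset.sum_le_sum hrow
    have hsym : ∑ i ∈ Finset.univ.erase i0, (A i i0)^2 = b := by
      rw [hbdef]
      exact Finset.sum_congr rfl fun i _ => by rw [hA.apply i0 i]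
    rw [Finset.sum_add_distrib, hsym] at hsum
    linarith
  -- Cauchy-Schwarz
  have hcard : (Finset.univ.erase i0).card = n - 1 := by
    rw [Finset.card_erase_of_mem (Finset.mem_univ i0), Finset.card_univ, Fintype.card_fin]
  have h4 : r^2 ≤ ((n:ℝ) - 1) * d := by
    have := sq_sum_le_card_mul_sum_sq (s := Finset.univ.erase i0) (f := fun i => A i i)
    rw [hcard] at this
    have hcast : ((n - 1 : ℕ) : ℝ) = (n:ℝ) - 1 := by
      have : (1:ℕ) ≤ n := by omega
      push_cast [Nat.cast_sub this]; ring
    calc r^2 ≤ ((n - 1 : ℕ) : ℝ) * d := this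
      _ = ((n:ℝ) - 1) * d := by rw [hcast]
  have hw : 0 ≤ ((n:ℝ)-1)*(s - a^2 - 2*b) - (t-a)^2 := by
    have hn1 : (0:ℝ) ≤ (n:ℝ) - 1 := by
      have : (1:ℝ) ≤ (n:ℝ) := by exact_mod_cast Nat.one_le_cast.mpr (by omega)
      linarith
    have : ((n:ℝ)-1)*d ≤ ((n:ℝ)-1)*(s - a^2 - 2*b) := by
      apply mul_le_mul_of_nonneg_left _ hn1
      linarith
    have hta : t - a = r := by rw [h2]; ring
    rw [hta]
    linarith
  have hm : (2:ℝ) ≤ (n:ℝ) := by exact_mod_cast hn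
  have := key_ineq (n:ℝ) t a b s hm hb hw
  rw [ge_iff_le] at this ⊢
  rw [h1]
  calc (((n:ℝ) - 1) / n) * (2 * t ^ 2 / n - s -
        ((n:ℝ) - 2) * Real.sqrt ((t ^ 2 / n) * (s - t ^ 2 / n) / ((n:ℝ) - 1)))
      = (((n:ℝ)-1)/n) * (2*t^2/n - s - ((n:ℝ)-2)*Real.sqrt ((t^2/n)*(s - t^2/n)/((n:ℝ)-1))) := by
        ring_nf
    _ ≤ t*a - (a^2 + b) := this
    _ = t * A i0 i0 - (a^2 + b) := rfl
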